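/- Let (Θ, 𝓕, P) be a probability space, Ω a Polish space, and let y_n, y, v: Θ → Ω be random variables with y_n → y P-a.s. Let Λ_n, Λ: Θ → [0,∞) be measurable with Λ_n → Λ P-a.s., E[Λ_n] = 1 for all n, and E[Λ] = 1. Suppose E[Λ_n φ(y_n)] = E[φ(v)] for every n and every bounded continuous φ: Ω → ℝ. Then E[Λ φ(y)] = E[φ(v)] for every bounded continuous φ: Ω → ℝ, and consequently the law μ_v is absolutely continuous with respect to the law μ_y with (dμ_v/dμ_y)(y) = E(Λ | σ(y)) P-a.s. If in addition Λ is σ(y)-measurable and Λ > 0 P-a.s., then μ_y and μ_v are mutually absolutely continuous and (dμ_y/dμ_v)(y) = Λ^{-1} P-a.s. -/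

import Mathlib

open MeasureTheory ProbabilityTheory Filter
open scoped ENNReal NNReal

private lemma integrable_mul_bdd {Θ : Type*} [MeasurableSpace Θ] {P : Measure Θ}
    {W g : Θ → ℝ} (hWint : Integrable W P) (hWnn : ∀ θ, 0 ≤ W θ)
    (hgm : AEStronglyMeasurable g P) {C : ℝ} (hg : ∀ θ, |g θ| ≤ C) :
    Integrable (fun θ => W θ * g θ) P := by
  refine (hWint.const_mul C).mono' (hWint.aestronglyMeasurable.mul hgm) ?_
  refine Eventually.of_forall fun θ => ?_
  rw [Real.norm_eq_abs, abs_mul, abs_of_nonneg (hWnn θ)]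
  calc W θ * |g θ| ≤ W θ * C := mul_le_mul_of_nonneg_left (hg θ) (hWnn θ)
    _ = C * W θ := mul_comm _ _

private lemma integrable_of_bdd {Θ : Type*} [MeasurableSpace Θ] {P : Measure Θ}
    [IsFiniteMeasure P] {f : Θ → ℝ} (hf : AEStronglyMeasurable f P) {C : ℝ}
    (h : ∀ θ, |f θ| ≤ C) : Integrable f P :=
  (integrable_const C).mono' hf (Eventually.of_forall fun θ => by
    simpa [Real.norm_eq_abs] using h θ)

/-- Passing to the limit in the Girsanov change-of-variable identity:
if `y_n → y` a.s., `Λ_n → Λ` a.s. with `E[Λ_n] = E[Λ] = 1`, and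
`E[Λ_n φ(y_n)] = E[φ(v)]` for all bounded continuous `φ`, then `E[Λ φ(y)] = E[φ(v)]` for all
bounded continuous `φ`, whence `μ_v ≪ μ_y` with `(dμ_v/dμ_y)(y) = E(Λ | σ(y))` a.s.; if moreover
`Λ` is `σ(y)`-measurable and a.s. positive, then `μ_y ∼ μ_v` and `(dμ_y/dμ_v)(y) = Λ⁻¹` a.s. -/
theorem girsanov_limit_passage
    {Θ Ω : Type*} [MeasurableSpace Θ]
    [MetricSpace Ω] [PolishSpace Ω] [MeasurableSpace Ω] [BorelSpace Ω]
    (P : Measure Θ) [IsProbabilityMeasure P]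
    (y v : Θ → Ω) (yn : ℕ → Θ → Ω)
    (hym : Measurable y) (hvm : Measurable v) (hynm : ∀ n, Measurable (yn n))
    (hyconv : ∀ᵐ θ ∂P, Tendsto (fun n => yn n θ) atTop (nhds (y θ)))
    (Λ : Θ → ℝ) (Λn : ℕ → Θ → ℝ)
    (hΛm : Measurable Λ) (hΛnm : ∀ n, Measurable (Λn n))
    (hΛnonneg : ∀ θ, 0 ≤ Λ θ) (hΛnnonneg : ∀ n θ, 0 ≤ Λn n θ)
    (hΛconv : ∀ᵐ θ ∂P, Tendsto (fun n => Λn n θ) atTop (nhds (Λ θ)))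
    (hEn : ∀ n, ∫ θ, Λn n θ ∂P = 1) (hE : ∫ θ, Λ θ ∂P = 1)
    (hgirsanov : ∀ n, ∀ φ : Ω → ℝ, Continuous φ → (∃ C, ∀ ω, |φ ω| ≤ C) →
      ∫ θ, Λn n θ * φ (yn n θ) ∂P = ∫ θ, φ (v θ) ∂P) :
    (∀ φ : Ω → ℝ, Continuous φ → (∃ C, ∀ ω, |φ ω| ≤ C) →
        ∫ θ, Λ θ * φ (y θ) ∂P = ∫ θ, φ (v θ) ∂P) ∧
      (P.map v ≪ P.map y ∧
        ∀ᵐ θ ∂P, (P.map v).rnDeriv (P.map y) (y θ)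
          = ENNReal.ofReal ((P[Λ | MeasurableSpace.comap y inferInstance]) θ)) ∧
      (Measurable[MeasurableSpace.comap y inferInstance] Λ → (∀ᵐ θ ∂P, 0 < Λ θ) →
        (P.map y ≪ P.map v ∧ P.map v ≪ P.map y ∧
          ∀ᵐ θ ∂P, (P.map y).rnDeriv (P.map v) (y θ) = ENNReal.ofReal (Λ θ)⁻¹)) := by
  -- Integrability of the densities
  have hΛint : Integrable Λ P := by
    by_contra h
    rw [integral_undef h] at hE; norm_num at hE
  have hΛnint : ∀ n, Integrable (Λn n) P := by
    intro n
    by_contra h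
    have := hEn n
    rw [integral_undef h] at this; norm_num at this
  -- Part 1: limit passage
  have part1 : ∀ φ : Ω → ℝ, Continuous φ → (∃ C, ∀ ω, |φ ω| ≤ C) →
      ∫ θ, Λ θ * φ (y θ) ∂P = ∫ θ, φ (v θ) ∂P := by
    rintro φ hφc ⟨C₀, hC₀⟩
    obtain ⟨C, hCnn, hC⟩ : ∃ C : ℝ, 0 ≤ C ∧ ∀ ω, |φ ω| ≤ C :=
      ⟨|C₀|, abs_nonneg _, fun ω => (hC₀ ω).trans (le_abs_self _)⟩
    have hφm : Measurable φ := hφc.measurable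
    set I := ∫ θ, φ (v θ) ∂P with hI
    have hIle : |I| ≤ C := by
      have h1 := norm_integral_le_of_norm_le_const (μ := P)
        (f := fun θ => φ (v θ)) (C := C)
        (Eventually.of_forall fun θ => by simpa [Real.norm_eq_abs] using hC (v θ))
      simpa [Real.norm_eq_abs] using h1
    -- Fatou-type bound, applied to φ and -φ
    have fatou : ∀ ψ : Ω → ℝ, Continuous ψ → (∀ ω, |ψ ω| ≤ C) →
        ∫⁻ θ, ENNReal.ofReal (Λ θ * (C + ψ (y θ))) ∂P
          ≤ ENNReal.ofReal (C + ∫ θ, ψ (v θ) ∂P) := by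
      intro ψ hψc hψC
      have hψm : Measurable ψ := hψc.measurable
      have hψnn : ∀ ω, 0 ≤ C + ψ ω := fun ω => by
        have := (abs_le.mp (hψC ω)).1; linarith
      have hint_n : ∀ n, Integrable (fun θ => Λn n θ * (C + ψ (yn n θ))) P := fun n =>
        integrable_mul_bdd (hΛnint n) (hΛnnonneg n)
          ((measurable_const.add (hψm.comp (hynm n))).aestronglyMeasurable)
          (C := 2 * C) (fun θ => by
            have h1 := abs_le.mp (hψC (yn n θ)); rw [abs_of_nonneg (hψnn _)]; linarith)
      have hInt_n : ∀ n, ∫ θ, Λn n θ * (C + ψ (yn n θ)) ∂P = C + ∫ θ, ψ (v θ) ∂P := by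
        intro n
        have h1 : Integrable (fun θ => Λn n θ * ψ (yn n θ)) P :=
          integrable_mul_bdd (hΛnint n) (hΛnnonneg n)
            ((hψm.comp (hynm n)).aestronglyMeasurable) (fun θ => hψC _)
        have h2 : (fun θ => Λn n θ * (C + ψ (yn n θ)))
            = fun θ => C * Λn n θ + Λn n θ * ψ (yn n θ) := by ext θ; ring
        rw [h2, integral_add ((hΛnint n).const_mul C) h1, integral_const_mul, hEn n,
          hgirsanov n ψ hψc ⟨C, hψC⟩, mul_one]
      have hconv : ∀ᵐ θ ∂P, Tendsto (fun n => ENNReal.ofReal (Λn n θ * (C + ψ (yn n θ))))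
          atTop (nhds (ENNReal.ofReal (Λ θ * (C + ψ (y θ))))) := by
        filter_upwards [hΛconv, hyconv] with θ h1 h2
        exact (ENNReal.continuous_ofReal.tendsto _).comp
          (h1.mul (tendsto_const_nhds.add ((hψc.tendsto _).comp h2)))
      calc ∫⁻ θ, ENNReal.ofReal (Λ θ * (C + ψ (y θ))) ∂P
          = ∫⁻ θ, liminf (fun n => ENNReal.ofReal (Λn n θ * (C + ψ (yn n θ)))) atTop ∂P := by
            refine lintegral_congr_ae ?_
            filter_upwards [hconv] with θ h using h.liminf_eq.symm
        _ ≤ liminf (fun n => ∫⁻ θ, ENNReal.ofReal (Λn n θ * (C + ψ (yn n θ))) ∂P) atTop :=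
            lintegral_liminf_le fun n =>
              ((hΛnm n).mul (measurable_const.add (hψm.comp (hynm n)))).ennreal_ofReal
        _ = ENNReal.ofReal (C + ∫ θ, ψ (v θ) ∂P) := by
            have heq : ∀ n, ∫⁻ θ, ENNReal.ofReal (Λn n θ * (C + ψ (yn n θ))) ∂P
                = ENNReal.ofReal (C + ∫ θ, ψ (v θ) ∂P) := by
              intro n
              rw [← hInt_n n, ← ofReal_integral_eq_lintegral_ofReal (hint_n n)
                (Eventually.of_forall fun θ => mul_nonneg (hΛnnonneg n θ) (hψnn _))]
            simp_rw [heq]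
            exact liminf_const _
    have hF := fatou φ hφc hC
    have hG := fatou (fun ω => -φ ω) hφc.neg (fun ω => by rw [abs_neg]; exact hC ω)
    rw [show ∫ θ, -φ (v θ) ∂P = -I by rw [hI, ← integral_neg]] at hG
    -- the sum identity
    have hφynn : ∀ ω, 0 ≤ C + φ ω := fun ω => by have := (abs_le.mp (hC ω)).1; linarith
    have hφynn' : ∀ ω, 0 ≤ C + -φ ω := fun ω => by have := (abs_le.mp (hC ω)).2; linarith
    have hmeasF : Measurable fun θ => ENNReal.ofReal (Λ θ * (C + φ (y θ))) :=
      (hΛm.mul (measurable_const.add (hφm.comp hym))).ennreal_ofReal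
    have hsum : (∫⁻ θ, ENNReal.ofReal (Λ θ * (C + φ (y θ))) ∂P)
        + (∫⁻ θ, ENNReal.ofReal (Λ θ * (C + -φ (y θ))) ∂P) = ENNReal.ofReal (2 * C) := by
      rw [← lintegral_add_left hmeasF]
      have : ∀ θ, ENNReal.ofReal (Λ θ * (C + φ (y θ))) + ENNReal.ofReal (Λ θ * (C + -φ (y θ)))
          = ENNReal.ofReal (2 * C * Λ θ) := by
        intro θ
        rw [← ENNReal.ofReal_add (mul_nonneg (hΛnonneg θ) (hφynn _))
          (mul_nonneg (hΛnonneg θ) (hφynn' _))]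
        congr 1; ring
      simp_rw [this]
      rw [← ofReal_integral_eq_lintegral_ofReal (hΛint.const_mul (2 * C))
        (Eventually.of_forall fun θ => mul_nonneg (by linarith) (hΛnonneg θ)),
        integral_const_mul, hE, mul_one]
    have hCI1 : (0:ℝ) ≤ C + I := by have := (abs_le.mp hIle).1; linarith
    have hCI2 : (0:ℝ) ≤ C - I := by have := (abs_le.mp hIle).2; linarith
    have hsplit : ENNReal.ofReal (2 * C) = ENNReal.ofReal (C + I) + ENNReal.ofReal (C + -I) := by
      rw [← ENNReal.ofReal_add hCI1 (by linarith)]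
      congr 1; ring
    -- conclude the equality for F
    have hFge : ENNReal.ofReal (C + I) ≤ ∫⁻ θ, ENNReal.ofReal (Λ θ * (C + φ (y θ))) ∂P := by
      have h1 : ENNReal.ofReal (C + I) + ENNReal.ofReal (C + -I)
          ≤ (∫⁻ θ, ENNReal.ofReal (Λ θ * (C + φ (y θ))) ∂P) + ENNReal.ofReal (C + -I) := by
        rw [← hsplit, ← hsum]
        exact add_le_add_right hG _
      exact (ENNReal.add_le_add_iff_right ENNReal.ofReal_ne_top).mp h1
    have hFeq := le_antisymm hF hFge
    -- convert back to a Bochner integral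
    have hfint : Integrable (fun θ => Λ θ * (C + φ (y θ))) P :=
      integrable_mul_bdd hΛint hΛnonneg
        ((measurable_const.add (hφm.comp hym)).aestronglyMeasurable)
        (C := 2 * C) (fun θ => by
          have h1 := abs_le.mp (hC (y θ)); rw [abs_of_nonneg (hφynn _)]; linarith)
    rw [← ofReal_integral_eq_lintegral_ofReal hfint
      (Eventually.of_forall fun θ => mul_nonneg (hΛnonneg θ) (hφynn _))] at hFeq
    have hIeq : ∫ θ, Λ θ * (C + φ (y θ)) ∂P = C + I :=
      (ENNReal.ofReal_eq_ofReal_iff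
        (integral_nonneg fun θ => mul_nonneg (hΛnonneg θ) (hφynn _)) hCI1).mp hFeq
    have h2 : (fun θ => Λ θ * (C + φ (y θ))) = fun θ => C * Λ θ + Λ θ * φ (y θ) := by
      ext θ; ring
    have h1 : Integrable (fun θ => Λ θ * φ (y θ)) P :=
      integrable_mul_bdd hΛint hΛnonneg ((hφm.comp hym).aestronglyMeasurable) (fun θ => hC _)
    rw [h2, integral_add (hΛint.const_mul C) h1, integral_const_mul, hE, mul_one] at hIeq
    linarith
  -- setup for parts 2 and 3
  have hm : MeasurableSpace.comap y inferInstance ≤ _ := hym.comap_le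
  haveI : SigmaFinite (P.trim hm) := by infer_instance
  set lam : Θ → ENNReal := fun θ => ENNReal.ofReal (Λ θ) with hlamdef
  have hlamm : Measurable lam := hΛm.ennreal_ofReal
  haveI : IsFiniteMeasure (P.withDensity lam) := by
    refine isFiniteMeasure_withDensity ?_
    rw [← ofReal_integral_eq_lintegral_ofReal hΛint (Eventually.of_forall hΛnonneg), hE]
    exact ENNReal.ofReal_ne_top
  haveI : IsProbabilityMeasure (P.map v) := Measure.isProbabilityMeasure_map hvm.aemeasurable
  haveI : IsProbabilityMeasure (P.map y) := Measure.isProbabilityMeasure_map hym.aemeasurable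
  -- Step A: identification of the law of v
  have hmapA : P.map v = (P.withDensity lam).map y := by
    apply ext_of_forall_lintegral_eq_of_IsFiniteMeasure
    intro f
    have hfc : Continuous fun ω => (f ω : ℝ) := NNReal.continuous_coe.comp f.continuous
    obtain ⟨C, hfb⟩ : ∃ C : ℝ, ∀ ω, |(f ω : ℝ)| ≤ C := by
      obtain ⟨D, hD⟩ := f.bounded
      rcases isEmpty_or_nonempty Ω with h | ⟨⟨ω₀⟩⟩
      · exact ⟨0, fun ω => (h.false ω).elim⟩
      · refine ⟨D + (f ω₀ : ℝ), fun ω => ?_⟩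
        have h1 := hD ω ω₀
        rw [NNReal.dist_eq] at h1
        have h2 := abs_le.mp h1
        rw [abs_of_nonneg (f ω).coe_nonneg]
        linarith [h2.2]
    have hfm : Measurable fun ω => (f ω : ℝ≥0∞) :=
      measurable_coe_nnreal_ennreal.comp f.continuous.measurable
    have hintv : Integrable (fun θ => (f (v θ) : ℝ)) P :=
      integrable_of_bdd ((hfc.measurable.comp hvm).aestronglyMeasurable) fun θ => hfb (v θ)
    have hintly : Integrable (fun θ => Λ θ * (f (y θ) : ℝ)) P :=
      integrable_mul_bdd hΛint hΛnonneg
        ((hfc.measurable.comp hym).aestronglyMeasurable) fun θ => hfb (y θ)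
    calc ∫⁻ ω, (f ω : ℝ≥0∞) ∂(P.map v)
        = ∫⁻ θ, (f (v θ) : ℝ≥0∞) ∂P := lintegral_map hfm hvm
      _ = ENNReal.ofReal (∫ θ, (f (v θ) : ℝ) ∂P) := lintegral_coe_eq_integral _ hintv
      _ = ENNReal.ofReal (∫ θ, Λ θ * (f (y θ) : ℝ) ∂P) := by
          rw [part1 (fun ω => (f ω : ℝ)) hfc ⟨C, hfb⟩]
      _ = ∫⁻ θ, ENNReal.ofReal (Λ θ * (f (y θ) : ℝ)) ∂P :=
          ofReal_integral_eq_lintegral_ofReal hintly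
            (Eventually.of_forall fun θ => mul_nonneg (hΛnonneg θ) (f (y θ)).coe_nonneg)
      _ = ∫⁻ θ, lam θ * (f (y θ) : ℝ≥0∞) ∂P := by
          refine lintegral_congr fun θ => ?_
          rw [ENNReal.ofReal_mul (hΛnonneg θ), ENNReal.ofReal_coe_nnreal]
      _ = ∫⁻ θ, (f (y θ) : ℝ≥0∞) ∂(P.withDensity lam) :=
          (lintegral_withDensity_eq_lintegral_mul P hlamm (hfm.comp hym)).symm
      _ = ∫⁻ ω, (f ω : ℝ≥0∞) ∂((P.withDensity lam).map y) := (lintegral_map hfm hym).symm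
  have hA : ∀ B : Set Ω, MeasurableSet B → P.map v B = ∫⁻ θ in y ⁻¹' B, lam θ ∂P := by
    intro B hB
    rw [hmapA, Measure.map_apply hym hB, withDensity_apply _ (hym hB)]
  -- absolute continuity μ_v ≪ μ_y
  have hac : P.map v ≪ P.map y := by
    refine Measure.AbsolutelyContinuous.mk fun B hB h0 => ?_
    rw [Measure.map_apply hym hB] at h0
    rw [hA B hB]
    exact setLIntegral_measure_zero _ _ h0
  -- the Radon–Nikodym derivative is the conditional expectation
  have hρm : Measurable ((P.map v).rnDeriv (P.map y)) := Measure.measurable_rnDeriv _ _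
  have hρfin : ∀ᵐ θ ∂P, (P.map v).rnDeriv (P.map y) (y θ) < ∞ :=
    ae_of_ae_map hym.aemeasurable (Measure.rnDeriv_lt_top _ _)
  have hsetl : ∀ B : Set Ω, MeasurableSet B →
      ∫⁻ θ in y ⁻¹' B, (P.map v).rnDeriv (P.map y) (y θ) ∂P = ∫⁻ θ in y ⁻¹' B, lam θ ∂P := by
    intro B hB
    rw [← setLIntegral_map hB hρm hym, Measure.setLIntegral_rnDeriv hac, hA B hB]
  set g : Θ → ℝ := fun θ => ((P.map v).rnDeriv (P.map y) (y θ)).toReal with hgdef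
  have hgm0 : Measurable g := (hρm.comp hym).ennreal_toReal
  have hgint : Integrable g P := by
    refine ⟨hgm0.aestronglyMeasurable, ?_⟩
    rw [hasFiniteIntegral_iff_ofReal (Eventually.of_forall fun θ => ENNReal.toReal_nonneg)]
    refine lt_of_le_of_lt (lintegral_mono fun θ => ENNReal.ofReal_toReal_le) ?_
    rw [← lintegral_map hρm hym]
    exact lt_of_le_of_lt Measure.lintegral_rnDeriv_le (by simp)
  have hgnn : ∀ θ, 0 ≤ g θ := fun θ => ENNReal.toReal_nonneg
  have hset_eq : ∀ s : Set Θ, MeasurableSet[MeasurableSpace.comap y inferInstance] s →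
      ∫ θ in s, g θ ∂P = ∫ θ in s, Λ θ ∂P := by
    intro s hs
    obtain ⟨B, hB, rfl⟩ := hs
    have h1 : ∫ θ in y ⁻¹' B, g θ ∂P
        = (∫⁻ θ in y ⁻¹' B, ENNReal.ofReal (g θ) ∂P).toReal := by
      rw [integral_eq_lintegral_of_nonneg_ae (Eventually.of_forall hgnn)
        hgm0.aestronglyMeasurable.restrict]
    have h2 : ∫⁻ θ in y ⁻¹' B, ENNReal.ofReal (g θ) ∂P
        = ∫⁻ θ in y ⁻¹' B, (P.map v).rnDeriv (P.map y) (y θ) ∂P := by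
      refine lintegral_congr_ae (ae_restrict_of_ae ?_)
      filter_upwards [hρfin] with θ h
      exact ENNReal.ofReal_toReal h.ne
    have h4 : ∫ θ in y ⁻¹' B, Λ θ ∂P = (∫⁻ θ in y ⁻¹' B, lam θ ∂P).toReal := by
      rw [integral_eq_lintegral_of_nonneg_ae (Eventually.of_forall hΛnonneg)
        hΛm.aestronglyMeasurable.restrict]
    rw [h1, h2, hsetl B hB, ← h4]
  have hcond : g =ᵐ[P] P[Λ | MeasurableSpace.comap y inferInstance] := by
    refine ae_eq_condExp_of_forall_setIntegral_eq hm hΛint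
      (fun s _ _ => hgint.integrableOn) (fun s hs _ => hset_eq s hs) ?_
    refine StronglyMeasurable.aestronglyMeasurable ?_
    exact Measurable.stronglyMeasurable
      ((hρm.ennreal_toReal).comp (comap_measurable y))
  have hrnd : ∀ᵐ θ ∂P, (P.map v).rnDeriv (P.map y) (y θ)
      = ENNReal.ofReal ((P[Λ | MeasurableSpace.comap y inferInstance]) θ) := by
    filter_upwards [hρfin, hcond] with θ h1 h2
    rw [← h2, hgdef]
    exact (ENNReal.ofReal_toReal h1.ne).symm
  refine ⟨part1, ⟨hac, hrnd⟩, ?_⟩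
  -- Part 3
  intro hΛcm hΛpos
  have hμν : P.map y ≪ P.map v := by
    refine Measure.AbsolutelyContinuous.mk fun B hB h0 => ?_
    rw [hA B hB] at h0
    rw [Measure.map_apply hym hB]
    have h0' : lam =ᵐ[P.restrict (y ⁻¹' B)] 0 := (lintegral_eq_zero_iff hlamm).mp h0
    have hfalse : ∀ᵐ θ ∂P.restrict (y ⁻¹' B), False := by
      filter_upwards [h0', ae_restrict_of_ae hΛpos] with θ ha hb
      rw [hlamdef] at ha
      simp only [Pi.zero_apply, ENNReal.ofReal_eq_zero] at ha
      exact absurd ha (not_le.mpr hb)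
    have hbot : P.restrict (y ⁻¹' B) = 0 := by
      have := ae_iff.mp hfalse
      simpa using this
    exact Measure.restrict_eq_zero.mp hbot
  have hce : P[Λ | MeasurableSpace.comap y inferInstance] = Λ :=
    condExp_of_stronglyMeasurable hm hΛcm.stronglyMeasurable hΛint
  have hkey : ∀ᵐ θ ∂P, (P.map v).rnDeriv (P.map y) (y θ) = ENNReal.ofReal (Λ θ) := by
    rw [hce] at hrnd; exact hrnd
  have hinv := Measure.inv_rnDeriv (μ := P.map v) (ν := P.map y) hac
  have hinv' : ((P.map v).rnDeriv (P.map y))⁻¹ =ᵐ[P.map y] (P.map y).rnDeriv (P.map v) :=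
    hμν.ae_eq hinv
  have hpull : ∀ᵐ θ ∂P,
      ((P.map v).rnDeriv (P.map y) (y θ))⁻¹ = (P.map y).rnDeriv (P.map v) (y θ) :=
    ae_of_ae_map hym.aemeasurable hinv'
  refine ⟨hμν, hac, ?_⟩
  filter_upwards [hpull, hkey, hΛpos] with θ h1 h2 h3
  rw [← h1, h2, ENNReal.ofReal_inv_of_pos h3]
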